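/- For any nonempty subset S of the positive integers, the generating function P0^S(x,y) of crossing-free partitions of points on a circle all of whose blocks have size in S (x marking points, y marking blocks) satisfies P0^S(x,y) = 1 + y · Σ_{s∈S} x^s · P0^S(x,y)^s. -/

import Mathlib

/-- Two chords `(p.1, p.2)` and `(q.1, q.2)` of a circle with vertices labeled
`0, 1, …, n-1` in circular order interleave, i.e. cross, when
`p.1 < q.1 < p.2 < q.2`. -/
def Interleaves {n : ℕ} (p q : Fin n × Fin n) : Prop :=
  p.1 < q.1 ∧ q.1 < p.2 ∧ p.2 < q.2

instance {n : ℕ} (p q : Fin n × Fin n) : Decidable (Interleaves p q) :=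
  inferInstanceAs (Decidable (_ ∧ _ ∧ _))

/-- The number of crossings of a set of chords (each chord recorded with its
endpoints in increasing order): the number of unordered pairs of chords whose
endpoints interleave around the circle. -/
def crossNum {n : ℕ} (D : Finset (Fin n × Fin n)) : ℕ :=
  ((D ×ˢ D).filter fun pq => Interleaves pq.1 pq.2).card

/-- `a` and `b` lie in the same block of the partition `P`. -/
def SameBlock {n : ℕ} (P : Finpartition (Finset.univ : Finset (Fin n))) (a b : Fin n) : Prop :=
  ∃ B ∈ P.parts, a ∈ B ∧ b ∈ B

/-- The number of crossings (counted with multiplicity) of a partition of `n`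
points on a circle: the number of unordered pairs of interleaving chords whose
endpoints lie two in one block and two in a different block. -/
noncomputable def crossNumPart {n : ℕ}
    (P : Finpartition (Finset.univ : Finset (Fin n))) : ℕ :=
  Nat.card {q : (Fin n × Fin n) × (Fin n × Fin n) //
    Interleaves q.1 q.2 ∧ SameBlock P q.1.1 q.1.2 ∧ SameBlock P q.2.1 q.2.2 ∧
    ¬ SameBlock P q.1.1 q.2.1}

open MvPowerSeries

/-- The generating function `P₀^S(x,y)` of crossing-free partitions of points
on a circle all of whose blocks have size in `S`, where `x` (variable `0`)
marks points and `y` (variable `1`) marks blocks. -/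
noncomputable def partGF0S (S : Set ℕ) : MvPowerSeries (Fin 2) ℚ :=
  fun e => (Nat.card {P : Finpartition (Finset.univ : Finset (Fin (e 0))) //
    (∀ B ∈ P.parts, B.card ∈ S) ∧ crossNumPart P = 0 ∧ P.parts.card = e 1} : ℚ)

namespace PartGF

/-- noncrossing predicate -/
def NC {n : ℕ} (P : Finpartition (Finset.univ : Finset (Fin n))) : Prop :=
  ∀ p q : Fin n × Fin n, Interleaves p q → SameBlock P p.1 p.2 → SameBlock P q.1 q.2 →
    SameBlock P p.1 q.1

lemma crossNumPart_eq_zero_iff {n : ℕ} (P : Finpartition (Finset.univ : Finset (Fin n))) :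
    crossNumPart P = 0 ↔ NC P := by
  rw [crossNumPart, Nat.card_eq_zero]
  constructor
  · rintro (h | h)
    · intro p q hpq h1 h2
      by_contra hnot
      exact h.elim' ⟨(p, q), hpq, h1, h2, hnot⟩
    · exact absurd h (not_infinite_iff_finite.2 (by infer_instance))
  · intro h
    refine Or.inl ⟨?_⟩
    rintro ⟨⟨p, q⟩, hpq, h1, h2, hnot⟩
    exact hnot (h p q hpq h1 h2)

abbrev Valid (S : Set ℕ) (n m : ℕ) : Type :=
  {P : Finpartition (Finset.univ : Finset (Fin n)) //
    (∀ B ∈ P.parts, B.card ∈ S) ∧ crossNumPart P = 0 ∧ P.parts.card = m}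

noncomputable def cnt (S : Set ℕ) (n m : ℕ) : ℕ := Nat.card (Valid S n m)

lemma coeff_partGF0S (S : Set ℕ) (e : Fin 2 →₀ ℕ) :
    MvPowerSeries.coeff e (partGF0S S) = (cnt S (e 0) (e 1) : ℚ) := rfl

lemma parts_eq_empty_zero {P : Finpartition (Finset.univ : Finset (Fin 0))} : P.parts = ∅ := by
  rw [Finpartition.parts_eq_empty_iff]
  exact Finset.univ_eq_empty

lemma crossNumPart_zero_pts (P : Finpartition (Finset.univ : Finset (Fin 0))) :
    crossNumPart P = 0 := by
  rw [crossNumPart_eq_zero_iff]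
  intro p q
  exact p.1.elim0

lemma cnt_zero (S : Set ℕ) (m : ℕ) : cnt S 0 m = if m = 0 then 1 else 0 := by
  split_ifs with hm
  · subst hm
    rw [cnt, Nat.card_eq_one_iff_unique]
    constructor
    · constructor
      rintro ⟨P, hP⟩ ⟨P', hP'⟩
      apply Subtype.ext
      apply Finpartition.ext
      rw [parts_eq_empty_zero, parts_eq_empty_zero]
    · refine ⟨⟨⊥, ?_, crossNumPart_zero_pts _, ?_⟩⟩
      · intro B hB
        rw [parts_eq_empty_zero] at hB
        exact absurd hB (Finset.notMem_empty _)
      · rw [parts_eq_empty_zero]; rfl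
  · rw [cnt, Nat.card_eq_zero]
    left
    constructor
    rintro ⟨P, _, _, hPm⟩
    rw [parts_eq_empty_zero] at hPm
    simp at hPm
    exact hm hPm.symm

lemma cnt_blocks_zero (S : Set ℕ) {n : ℕ} (hn : 0 < n) : cnt S n 0 = 0 := by
  rw [cnt, Nat.card_eq_zero]
  left
  constructor
  rintro ⟨P, _, _, hPm⟩
  rw [Finset.card_eq_zero, Finpartition.parts_eq_empty_iff] at hPm
  have : (⟨0, hn⟩ : Fin n) ∈ (Finset.univ : Finset (Fin n)) := Finset.mem_univ _
  rw [hPm] at this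
  exact absurd this (Finset.notMem_empty _)

/- ### Fin 2 finsupp helpers -/

lemma fin2_ext {u v : Fin 2 →₀ ℕ} (h0 : u 0 = v 0) (h1 : u 1 = v 1) : u = v := by
  ext x
  revert x
  rw [Fin.forall_fin_two]
  exact ⟨h0, h1⟩

lemma fin2_single_add_apply_zero (a b : ℕ) :
    ((Finsupp.single (0 : Fin 2) a + Finsupp.single (1 : Fin 2) b : Fin 2 →₀ ℕ)) 0 = a := by
  rw [Finsupp.add_apply]
  simp [Finsupp.single_apply]

lemma fin2_single_add_apply_one (a b : ℕ) :
    ((Finsupp.single (0 : Fin 2) a + Finsupp.single (1 : Fin 2) b : Fin 2 →₀ ℕ)) 1 = b := by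
  rw [Finsupp.add_apply]
  simp [Finsupp.single_apply]

lemma fin2_eq_single_add (u : Fin 2 →₀ ℕ) :
    u = Finsupp.single (0 : Fin 2) (u 0) + Finsupp.single (1 : Fin 2) (u 1) :=
  fin2_ext (by rw [fin2_single_add_apply_zero]) (by rw [fin2_single_add_apply_one])

end PartGF
namespace PartGF

lemma natCard_sigma {ι : Type*} [Fintype ι] {f : ι → Type*} [∀ i, Finite (f i)] :
    Nat.card (Σ i, f i) = ∑ i, Nat.card (f i) := by
  letI : ∀ i, Fintype (f i) := fun i => Fintype.ofFinite (f i)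
  simp only [Nat.card_eq_fintype_card]
  exact Fintype.card_sigma

structure Decomp (S : Set ℕ) (n m : ℕ) where
  s : ℕ
  hs : s ∈ S
  g : Fin s → ℕ × ℕ
  hg1 : (∑ i, (g i).1) + s = n
  hg2 : (∑ i, (g i).2) + 1 = m
  part : ∀ i, Valid S (g i).1 (g i).2

abbrev FiberT (S : Set ℕ) (s a b : ℕ) : Type :=
  Σ g : {g : Fin s → ℕ × ℕ // (∑ i, (g i).1) = a ∧ (∑ i, (g i).2) = b},
    ∀ i : Fin s, Valid S (g.1 i).1 (g.1 i).2

instance gsubFinite (s a b : ℕ) :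
    Finite {g : Fin s → ℕ × ℕ // (∑ i, (g i).1) = a ∧ (∑ i, (g i).2) = b} := by
  have key : ∀ g : {g : Fin s → ℕ × ℕ // (∑ i, (g i).1) = a ∧ (∑ i, (g i).2) = b},
      ∀ i, (g.1 i).1 < a + 1 ∧ (g.1 i).2 < b + 1 := by
    intro g i
    obtain ⟨h1, h2⟩ := g.2
    constructor
    · have h3 : (g.1 i).1 ≤ ∑ j, (g.1 j).1 :=
        Finset.single_le_sum (f := fun j => (g.1 j).1) (fun j _ => Nat.zero_le _)
          (Finset.mem_univ i)
      omega
    · have h3 : (g.1 i).2 ≤ ∑ j, (g.1 j).2 :=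
        Finset.single_le_sum (f := fun j => (g.1 j).2) (fun j _ => Nat.zero_le _)
          (Finset.mem_univ i)
      omega
  apply Finite.of_injective
    (fun g => (fun i => (⟨(g.1 i).1, (key g i).1⟩, ⟨(g.1 i).2, (key g i).2⟩) :
        Fin s → Fin (a + 1) × Fin (b + 1)))
  rintro g g' h
  apply Subtype.ext
  funext i
  have := congrFun h i
  simp only [Prod.mk.injEq, Fin.mk.injEq] at this
  exact Prod.ext this.1 this.2

noncomputable def toL {s : ℕ} (g : Fin s → ℕ × ℕ) : ℕ →₀ (Fin 2 →₀ ℕ) :=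
  Finsupp.onFinset (Finset.range s)
    (fun j => if h : j < s then
        Finsupp.single (0 : Fin 2) (g ⟨j, h⟩).1 + Finsupp.single (1 : Fin 2) (g ⟨j, h⟩).2
      else 0)
    (by intro j hj; rw [Finset.mem_range]; by_contra h; exact hj (dif_neg h))

lemma toL_apply_lt {s : ℕ} (g : Fin s → ℕ × ℕ) (i : Fin s) :
    toL g (i : ℕ) =
      Finsupp.single (0 : Fin 2) (g i).1 + Finsupp.single (1 : Fin 2) (g i).2 := by
  show dite _ _ _ = _
  rw [dif_pos i.isLt, Fin.eta]

lemma toL_apply_ge {s : ℕ} (g : Fin s → ℕ × ℕ) {j : ℕ} (hj : ¬ j < s) :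
    toL g j = 0 := by
  show dite _ _ _ = _
  rw [dif_neg hj]

lemma sum_toL_fst {s : ℕ} (g : Fin s → ℕ × ℕ) :
    ((Finset.range s).sum ⇑(toL g)) 0 = ∑ i, (g i).1 := by
  rw [Finsupp.finset_sum_apply]
  rw [← Fin.sum_univ_eq_sum_range (fun j => (toL g j) 0) s]
  apply Finset.sum_congr rfl
  intro i _
  rw [toL_apply_lt, fin2_single_add_apply_zero]

lemma sum_toL_snd {s : ℕ} (g : Fin s → ℕ × ℕ) :
    ((Finset.range s).sum ⇑(toL g)) 1 = ∑ i, (g i).2 := by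
  rw [Finsupp.finset_sum_apply]
  rw [← Fin.sum_univ_eq_sum_range (fun j => (toL g j) 1) s]
  apply Finset.sum_congr rfl
  intro i _
  rw [toL_apply_lt, fin2_single_add_apply_one]

lemma toL_mem {s a b : ℕ} (g : Fin s → ℕ × ℕ)
    (h1 : (∑ i, (g i).1) = a) (h2 : (∑ i, (g i).2) = b) :
    toL g ∈ Finset.finsuppAntidiag (Finset.range s)
      (Finsupp.single (0 : Fin 2) a + Finsupp.single (1 : Fin 2) b) := by
  rw [Finset.mem_finsuppAntidiag]
  refine ⟨fin2_ext ?_ ?_, Finsupp.support_onFinset_subset⟩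
  · rw [sum_toL_fst, fin2_single_add_apply_zero, h1]
  · rw [sum_toL_snd, fin2_single_add_apply_one, h2]

lemma mem_sum_fst {s a b : ℕ} {l : ℕ →₀ (Fin 2 →₀ ℕ)}
    (hl : l ∈ Finset.finsuppAntidiag (Finset.range s)
      (Finsupp.single (0 : Fin 2) a + Finsupp.single (1 : Fin 2) b)) :
    (∑ i : Fin s, l i 0) = a := by
  rw [Finset.mem_finsuppAntidiag] at hl
  have := congrArg (fun u : Fin 2 →₀ ℕ => u 0) hl.1
  simp only [fin2_single_add_apply_zero] at this
  rw [← this, Finsupp.finset_sum_apply, ← Fin.sum_univ_eq_sum_range (fun j => l j 0) s]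

lemma mem_sum_snd {s a b : ℕ} {l : ℕ →₀ (Fin 2 →₀ ℕ)}
    (hl : l ∈ Finset.finsuppAntidiag (Finset.range s)
      (Finsupp.single (0 : Fin 2) a + Finsupp.single (1 : Fin 2) b)) :
    (∑ i : Fin s, l i 1) = b := by
  rw [Finset.mem_finsuppAntidiag] at hl
  have := congrArg (fun u : Fin 2 →₀ ℕ => u 1) hl.1
  simp only [fin2_single_add_apply_one] at this
  rw [← this, Finsupp.finset_sum_apply, ← Fin.sum_univ_eq_sum_range (fun j => l j 1) s]

noncomputable def antidiagEquiv (s a b : ℕ) :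
    {l : ℕ →₀ (Fin 2 →₀ ℕ) //
       l ∈ Finset.finsuppAntidiag (Finset.range s)
         (Finsupp.single (0 : Fin 2) a + Finsupp.single (1 : Fin 2) b)} ≃
    {g : Fin s → ℕ × ℕ // (∑ i, (g i).1) = a ∧ (∑ i, (g i).2) = b} where
  toFun l := ⟨fun i => (l.1 i 0, l.1 i 1), mem_sum_fst l.2, mem_sum_snd l.2⟩
  invFun g := ⟨toL g.1, toL_mem g.1 g.2.1 g.2.2⟩
  left_inv l := by
    apply Subtype.ext
    ext j x
    by_cases h : j < s
    · have : toL (fun i : Fin s => (l.1 i 0, l.1 i 1)) j =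
          Finsupp.single (0 : Fin 2) (l.1 j 0) + Finsupp.single (1 : Fin 2) (l.1 j 1) := by
        have := toL_apply_lt (fun i : Fin s => (l.1 i 0, l.1 i 1)) ⟨j, h⟩
        simpa using this
      rw [this, ← fin2_eq_single_add (l.1 j)]
    · have h2 : l.1 j = 0 := by
        have hsupp := (Finset.mem_finsuppAntidiag.1 l.2).2
        by_contra hne
        have := hsupp (Finsupp.mem_support_iff.2 hne)
        rw [Finset.mem_range] at this
        exact h this
      rw [toL_apply_ge _ h, h2]
  right_inv g := by
    apply Subtype.ext
    funext i
    have := toL_apply_lt g.1 i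
    apply Prod.ext
    · show toL g.1 i 0 = (g.1 i).1
      rw [this, fin2_single_add_apply_zero]
    · show toL g.1 i 1 = (g.1 i).2
      rw [this, fin2_single_add_apply_one]

lemma card_fiberT (S : Set ℕ) (s a b : ℕ) :
    Nat.card (FiberT S s a b) =
      ∑ l ∈ Finset.finsuppAntidiag (Finset.range s)
          (Finsupp.single (0 : Fin 2) a + Finsupp.single (1 : Fin 2) b),
        ∏ i ∈ Finset.range s, cnt S (l i 0) (l i 1) := by
  classical
  have h1 : Nat.card (FiberT S s a b) =
      Nat.card (Σ l : {l : ℕ →₀ (Fin 2 →₀ ℕ) //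
          l ∈ Finset.finsuppAntidiag (Finset.range s)
            (Finsupp.single (0 : Fin 2) a + Finsupp.single (1 : Fin 2) b)},
        ∀ i : Fin s, Valid S (l.1 i 0) (l.1 i 1)) :=
    (Nat.card_congr (Equiv.sigmaCongrLeft
      (β := fun g : {g : Fin s → ℕ × ℕ // (∑ i, (g i).1) = a ∧ (∑ i, (g i).2) = b} =>
        ∀ i : Fin s, Valid S (g.1 i).1 (g.1 i).2) (antidiagEquiv s a b))).symm
  rw [h1, natCard_sigma]
  rw [← Finset.sum_coe_sort (Finset.finsuppAntidiag (Finset.range s)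
      (Finsupp.single (0 : Fin 2) a + Finsupp.single (1 : Fin 2) b))
      (fun l => ∏ i ∈ Finset.range s, cnt S (l i 0) (l i 1))]
  apply Finset.sum_congr rfl
  intro l _
  rw [Nat.card_pi]
  exact Fin.prod_univ_eq_prod_range (fun j => cnt S (l.1 j 0) (l.1 j 1)) s

def decompEquiv (S : Set ℕ) [DecidablePred (· ∈ S)] {n m : ℕ} (hm : 0 < m) :
    Decomp S n m ≃
      Σ s : {s : ℕ // s ∈ (Finset.range (n + 1)).filter (· ∈ S)},
        FiberT S s (n - s) (m - 1) where
  toFun d := ⟨⟨d.s, by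
      rw [Finset.mem_filter, Finset.mem_range]
      have := d.hg1
      exact ⟨by omega, d.hs⟩⟩,
    ⟨⟨d.g, by show (∑ i, (d.g i).1) = n - d.s; have := d.hg1; omega,
      by show (∑ i, (d.g i).2) = m - 1; have := d.hg2; omega⟩, d.part⟩⟩
  invFun x := ⟨x.1.1, (Finset.mem_filter.1 x.1.2).2, x.2.1.1,
    by
      have hr := (Finset.mem_filter.1 x.1.2).1
      rw [Finset.mem_range] at hr
      have h1 : (∑ i, (x.2.1.1 i).1) = n - x.1.1 := x.2.1.2.1
      show (∑ i, (x.2.1.1 i).1) + x.1.1 = n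
      omega,
    by
      have h2 : (∑ i, (x.2.1.1 i).2) = m - 1 := x.2.1.2.2
      show (∑ i, (x.2.1.1 i).2) + 1 = m
      omega,
    x.2.2⟩
  left_inv d := rfl
  right_inv x := rfl

lemma card_decomp (S : Set ℕ) [DecidablePred (· ∈ S)] {n m : ℕ} (hm : 0 < m) :
    Nat.card (Decomp S n m) =
      ∑ s ∈ (Finset.range (n + 1)).filter (· ∈ S),
        Nat.card (FiberT S s (n - s) (m - 1)) := by
  rw [Nat.card_congr (decompEquiv S hm), natCard_sigma]
  exact Finset.sum_coe_sort _ (fun s => Nat.card (FiberT S s (n - s) (m - 1)))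

end PartGF
namespace PartGF

section Build

variable {s : ℕ} (sz : Fin s → ℕ)

def szN (j : ℕ) : ℕ := if h : j < s then sz ⟨j, h⟩ else 0

def cpt (i : ℕ) : ℕ := i + ∑ j ∈ Finset.range i, szN sz j

lemma szN_coe (i : Fin s) : szN sz i = sz i := by rw [szN, dif_pos i.isLt, Fin.eta]

lemma cpt_zero : cpt sz 0 = 0 := by simp [cpt]

lemma cpt_succ (i : ℕ) : cpt sz (i + 1) = cpt sz i + szN sz i + 1 := by
  rw [cpt, cpt, Finset.sum_range_succ]; ring

lemma cpt_strictMono : StrictMono (cpt sz) := by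
  apply strictMono_nat_of_lt_succ
  intro i; rw [cpt_succ]; omega

lemma cpt_not_cut_gap {i j x : ℕ} (hj : cpt sz j = x) (h1 : cpt sz i < x)
    (h2 : x < cpt sz (i + 1)) : False := by
  have hij : i + 1 ≤ j := by
    by_contra h
    have : cpt sz j ≤ cpt sz i := (cpt_strictMono sz).monotone (by omega)
    omega
  have : cpt sz (i + 1) ≤ cpt sz j := (cpt_strictMono sz).monotone hij
  omega

lemma cpt_gap_unique {i j x : ℕ} (h1 : cpt sz i < x) (h2 : x < cpt sz (i + 1))
    (h3 : cpt sz j < x) (h4 : x < cpt sz (j + 1)) : i = j := by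
  rcases lt_trichotomy i j with h | h | h
  · exfalso
    have : cpt sz (i + 1) ≤ cpt sz j := (cpt_strictMono sz).monotone (by omega)
    omega
  · exact h
  · exfalso
    have : cpt sz (j + 1) ≤ cpt sz i := (cpt_strictMono sz).monotone (by omega)
    omega

variable {n : ℕ} (hn : (∑ i, sz i) + s = n)
include hn

lemma cpt_s : cpt sz s = n := by
  have h : ∑ j ∈ Finset.range s, szN sz j = ∑ i, sz i := by
    rw [← Fin.sum_univ_eq_sum_range (szN sz) s]
    exact Finset.sum_congr rfl (fun i _ => szN_coe sz i)
  rw [cpt, h]; omega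

lemma cpt_lt_n {i : ℕ} (hi : i < s) : cpt sz i < n := by
  rw [← cpt_s sz hn]; exact cpt_strictMono sz hi

lemma cpt_le_n {i : ℕ} (hi : i ≤ s) : cpt sz i ≤ n := by
  rw [← cpt_s sz hn]; exact (cpt_strictMono sz).monotone hi

lemma emb_bound {i : ℕ} (hi : i < s) {k : ℕ} (hk : k < szN sz i) : cpt sz i + 1 + k < n := by
  have h1 : cpt sz (i + 1) ≤ n := cpt_le_n sz hn hi
  have h2 := cpt_succ sz i
  omega

lemma cpt_locate {x : ℕ} (hx : x < n) :
    (∃ i < s, cpt sz i = x) ∨ ∃ i < s, cpt sz i < x ∧ x < cpt sz (i + 1) := by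
  have hex : ∃ j, x < cpt sz j := ⟨s, by rw [cpt_s sz hn]; exact hx⟩
  have hj0 : x < cpt sz (Nat.find hex) := Nat.find_spec hex
  have hj0pos : Nat.find hex ≠ 0 := by
    intro h; rw [h, cpt_zero] at hj0; omega
  have hj0le : Nat.find hex ≤ s := Nat.find_le (by rw [cpt_s sz hn]; exact hx)
  obtain ⟨i, hieq⟩ : ∃ i, Nat.find hex = i + 1 := ⟨Nat.find hex - 1, by omega⟩
  have hile : cpt sz i ≤ x := by
    have := Nat.find_min hex (by omega : i < Nat.find hex)
    omega
  have his : i < s := by omega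
  rw [hieq] at hj0
  rcases eq_or_lt_of_le hile with h | h
  · exact Or.inl ⟨i, his, h⟩
  · exact Or.inr ⟨i, his, h, hj0⟩

def embB (i : Fin s) : Fin n := ⟨cpt sz i, cpt_lt_n sz hn i.isLt⟩

def base : Finset (Fin n) := Finset.univ.image (embB sz hn)

def emb (i : Fin s) (k : Fin (sz i)) : Fin n :=
  ⟨cpt sz i + 1 + k, emb_bound sz hn i.isLt (by rw [szN_coe]; exact k.isLt)⟩

def blk (i : Fin s) (q : Finset (Fin (sz i))) : Finset (Fin n) := q.image (emb sz hn i)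

lemma embB_injective : Function.Injective (embB sz hn) := fun i j h =>
  Fin.ext ((cpt_strictMono sz).injective (congrArg Fin.val h))

lemma card_base : (base sz hn).card = s := by
  rw [base, Finset.card_image_of_injective _ (embB_injective sz hn), Finset.card_univ,
    Fintype.card_fin]

lemma mem_base {x : Fin n} : x ∈ base sz hn ↔ ∃ i : Fin s, cpt sz ↑i = ↑x := by
  constructor
  · intro hx
    obtain ⟨i, _, rfl⟩ := Finset.mem_image.1 hx
    exact ⟨i, rfl⟩
  · rintro ⟨i, hi⟩
    refine Finset.mem_image.2 ⟨i, Finset.mem_univ _, Fin.ext hi⟩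

lemma emb_injective (i : Fin s) : Function.Injective (emb sz hn i) := fun k l h => by
  have := congrArg Fin.val h
  simp only [emb] at this
  exact Fin.ext (by omega)

lemma card_blk (i : Fin s) (q : Finset (Fin (sz i))) : (blk sz hn i q).card = q.card :=
  Finset.card_image_of_injective _ (emb_injective sz hn i)

lemma mem_blk {i : Fin s} {q : Finset (Fin (sz i))} {x : Fin n} :
    x ∈ blk sz hn i q ↔ ∃ k ∈ q, emb sz hn i k = x := Finset.mem_image

lemma blk_range {i : Fin s} {q : Finset (Fin (sz i))} {x : Fin n} (hx : x ∈ blk sz hn i q) :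
    cpt sz ↑i < ↑x ∧ ↑x < cpt sz (↑i + 1) := by
  obtain ⟨k, hk, rfl⟩ := (mem_blk sz hn).1 hx
  have h1 : (emb sz hn i k : ℕ) = cpt sz ↑i + 1 + ↑k := rfl
  have h2 := cpt_succ sz (i : ℕ)
  have h3 : (k : ℕ) < szN sz ↑i := by rw [szN_coe]; exact k.isLt
  omega

lemma not_mem_base_of_gap {x : Fin n} {i : ℕ} (h1 : cpt sz i < ↑x)
    (h2 : ↑x < cpt sz (i + 1)) : x ∉ base sz hn := fun hx => by
  obtain ⟨j, hj⟩ := (mem_base sz hn).1 hx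
  exact cpt_not_cut_gap sz hj h1 h2

lemma exists_mem_parts (x : Fin n) :
    x ∈ base sz hn ∨ ∃ i : Fin s, ∃ k : Fin (sz i), emb sz hn i k = x := by
  rcases cpt_locate sz hn x.isLt with ⟨i, his, hi⟩ | ⟨i, his, h1, h2⟩
  · exact Or.inl ((mem_base sz hn).2 ⟨⟨i, his⟩, hi⟩)
  · right
    have hsz : szN sz i = sz ⟨i, his⟩ := szN_coe sz ⟨i, his⟩
    have hcs := cpt_succ sz i
    refine ⟨⟨i, his⟩, ⟨↑x - cpt sz i - 1, by omega⟩, ?_⟩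
    apply Fin.ext
    show cpt sz i + 1 + (↑x - cpt sz i - 1) = ↑x
    omega

variable (hs : 0 < s) (Q : ∀ i : Fin s, Finpartition (Finset.univ : Finset (Fin (sz i))))

def gparts : Finset (Finset (Fin n)) :=
  insert (base sz hn) (Finset.univ.biUnion fun i : Fin s => (Q i).parts.image (blk sz hn i))

lemma mem_gparts {X : Finset (Fin n)} :
    X ∈ gparts sz hn Q ↔ X = base sz hn ∨ ∃ i, ∃ q ∈ (Q i).parts, X = blk sz hn i q := by
  rw [gparts, Finset.mem_insert]
  apply or_congr Iff.rfl
  rw [Finset.mem_biUnion]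
  constructor
  · rintro ⟨i, _, hX⟩
    obtain ⟨q, hq, rfl⟩ := Finset.mem_image.1 hX
    exact ⟨i, q, hq, rfl⟩
  · rintro ⟨i, q, hq, rfl⟩
    exact ⟨i, Finset.mem_univ _, Finset.mem_image.2 ⟨q, hq, rfl⟩⟩

lemma blk_nonempty {i : Fin s} {q : Finset (Fin (sz i))} (hq : q ∈ (Q i).parts) :
    (blk sz hn i q).Nonempty :=
  ((Q i).nonempty_of_mem_parts hq).image _

lemma base_ne_blk {i : Fin s} {q : Finset (Fin (sz i))} (hq : q ∈ (Q i).parts) :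
    base sz hn ≠ blk sz hn i q := by
  intro h
  obtain ⟨x, hx⟩ := blk_nonempty sz hn Q hq
  have h2 := blk_range sz hn hx
  rw [← h] at hx
  exact not_mem_base_of_gap sz hn h2.1 h2.2 hx

lemma blk_disj_base {i : Fin s} {q : Finset (Fin (sz i))} :
    Disjoint (base sz hn) (blk sz hn i q) := by
  rw [Finset.disjoint_left]
  intro x hx hx2
  have h2 := blk_range sz hn hx2
  exact not_mem_base_of_gap sz hn h2.1 h2.2 hx

lemma blk_disj_blk {i j : Fin s} {q : Finset (Fin (sz i))} {q' : Finset (Fin (sz j))}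
    (h : blk sz hn i q ≠ blk sz hn j q') (hq : q ∈ (Q i).parts) (hq' : q' ∈ (Q j).parts) :
    Disjoint (blk sz hn i q) (blk sz hn j q') := by
  rw [Finset.disjoint_left]
  intro x hx hx'
  have hij : i = j := by
    have h1 := blk_range sz hn hx
    have h2 := blk_range sz hn hx'
    exact Fin.ext (cpt_gap_unique sz h1.1 h1.2 h2.1 h2.2)
  subst hij
  obtain ⟨k, hk, hke⟩ := (mem_blk sz hn).1 hx
  obtain ⟨k', hk', hke'⟩ := (mem_blk sz hn).1 hx'
  have hkk : k = k' := emb_injective sz hn i (hke.trans hke'.symm)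
  subst hkk
  have : q = q' := (Q i).eq_of_mem_parts hq hq' hk hk'
  exact h (by rw [this])

lemma gparts_pairwiseDisjoint :
    ∀ X ∈ gparts sz hn Q, ∀ Y ∈ gparts sz hn Q, X ≠ Y → Disjoint X Y := by
  intro X hX Y hY hXY
  rcases (mem_gparts sz hn Q).1 hX with rfl | ⟨i, q, hq, rfl⟩ <;>
    rcases (mem_gparts sz hn Q).1 hY with rfl | ⟨j, q', hq', rfl⟩
  · exact absurd rfl hXY
  · exact blk_disj_base sz hn
  · exact (blk_disj_base sz hn).symm
  · exact blk_disj_blk sz hn Q hXY hq hq'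

def GP : Finpartition (Finset.univ : Finset (Fin n)) where
  parts := gparts sz hn Q
  supIndep := Finset.supIndep_iff_pairwiseDisjoint.2
    (fun X hX Y hY hXY => gparts_pairwiseDisjoint sz hn Q X hX Y hY hXY)
  sup_parts := by
    apply Finset.Subset.antisymm
    · intro x _
      exact Finset.mem_univ _
    · intro x _
      rw [Finset.mem_sup]
      rcases exists_mem_parts sz hn x with hx | ⟨i, k, hk⟩
      · exact ⟨base sz hn, (mem_gparts sz hn Q).2 (Or.inl rfl), hx⟩
      · obtain ⟨q, hq, hkq⟩ := (Q i).exists_mem (Finset.mem_univ k)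
        exact ⟨blk sz hn i q, (mem_gparts sz hn Q).2 (Or.inr ⟨i, q, hq, rfl⟩),
          (mem_blk sz hn).2 ⟨k, hkq, hk⟩⟩
  bot_notMem := by
    intro h
    rcases (mem_gparts sz hn Q).1 h with h | ⟨i, q, hq, h⟩
    · have : embB sz hn ⟨0, hs⟩ ∈ base sz hn := Finset.mem_image.2 ⟨_, Finset.mem_univ _, rfl⟩
      rw [← h] at this
      exact absurd this (Finset.notMem_empty _)
    · obtain ⟨x, hx⟩ := blk_nonempty sz hn Q hq
      rw [← h] at hx
      exact absurd hx (Finset.notMem_empty _)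

lemma GP_parts_card : (GP sz hn hs Q).parts.card = 1 + ∑ i, (Q i).parts.card := by
  have hnotmem : base sz hn ∉ Finset.univ.biUnion
      (fun i : Fin s => (Q i).parts.image (blk sz hn i)) := by
    intro h
    obtain ⟨i, _, hX⟩ := Finset.mem_biUnion.1 h
    obtain ⟨q, hq, heq⟩ := Finset.mem_image.1 hX
    exact base_ne_blk sz hn Q hq heq.symm
  have hparts : (GP sz hn hs Q).parts = insert (base sz hn)
      (Finset.univ.biUnion fun i : Fin s => (Q i).parts.image (blk sz hn i)) := rfl
  rw [hparts, Finset.card_insert_of_notMem hnotmem, Finset.card_biUnion, add_comm]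
  · congr 1
    apply Finset.sum_congr rfl
    intro i _
    exact Finset.card_image_of_injective _ (Finset.image_injective (emb_injective sz hn i))
  · intro i _ j _ hij
    rw [Function.onFun, Finset.disjoint_left]
    intro X hXi hXj
    obtain ⟨q, hq, rfl⟩ := Finset.mem_image.1 hXi
    obtain ⟨q', hq', heq⟩ := Finset.mem_image.1 hXj
    obtain ⟨x, hx⟩ := blk_nonempty sz hn Q hq
    have h1 := blk_range sz hn hx
    rw [← heq] at hx
    have h2 := blk_range sz hn hx
    exact hij (Fin.ext (cpt_gap_unique sz h1.1 h1.2 h2.1 h2.2))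

lemma sameBlock_GP {a b : Fin n} {X : Finset (Fin n)} (hX : X ∈ (GP sz hn hs Q).parts)
    (ha : a ∈ X) (hb : b ∈ X) : SameBlock (GP sz hn hs Q) a b := ⟨X, hX, ha, hb⟩

lemma GP_NC (hQ : ∀ i, NC (Q i)) : NC (GP sz hn hs Q) := by
  rintro ⟨p1, p2⟩ ⟨q1, q2⟩ ⟨hpq1, hpq2, hpq3⟩ ⟨X, hX, hp1, hp2⟩ ⟨Y, hY, hq1, hq2⟩
  simp only at hpq1 hpq2 hpq3 hp1 hp2 hq1 hq2
  rw [Fin.lt_def] at hpq1 hpq2 hpq3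
  have hXm := (mem_gparts sz hn Q).1 hX
  have hYm := (mem_gparts sz hn Q).1 hY
  rcases hXm with rfl | ⟨i, q, hq, rfl⟩ <;> rcases hYm with rfl | ⟨j, q', hq', rfl⟩
  · exact ⟨base sz hn, hX, hp1, hq1⟩
  · exfalso
    have hq1r := blk_range sz hn hq1
    have hq2r := blk_range sz hn hq2
    obtain ⟨a, ha⟩ := (mem_base sz hn).1 hp2
    exact cpt_not_cut_gap sz (i := (j : ℕ)) ha (by omega) (by omega)
  · exfalso
    have hp1r := blk_range sz hn hp1
    have hp2r := blk_range sz hn hp2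
    obtain ⟨a, ha⟩ := (mem_base sz hn).1 hq1
    exact cpt_not_cut_gap sz (i := (i : ℕ)) ha (by omega) (by omega)
  · have hij : i = j := by
      have h1 := blk_range sz hn hp1
      have h2 := blk_range sz hn hp2
      have h3 := blk_range sz hn hq1
      exact Fin.ext (cpt_gap_unique sz (x := (q1 : ℕ)) (by omega) (by omega) h3.1 h3.2)
    subst hij
    obtain ⟨k1, hk1, hke1⟩ := (mem_blk sz hn).1 hp1
    obtain ⟨k2, hk2, hke2⟩ := (mem_blk sz hn).1 hp2
    obtain ⟨k3, hk3, hke3⟩ := (mem_blk sz hn).1 hq1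
    obtain ⟨k4, hk4, hke4⟩ := (mem_blk sz hn).1 hq2
    have hv1 : ↑p1 = cpt sz ↑i + 1 + (k1 : ℕ) := by rw [← hke1]; rfl
    have hv2 : ↑p2 = cpt sz ↑i + 1 + (k2 : ℕ) := by rw [← hke2]; rfl
    have hv3 : ↑q1 = cpt sz ↑i + 1 + (k3 : ℕ) := by rw [← hke3]; rfl
    have hv4 : ↑q2 = cpt sz ↑i + 1 + (k4 : ℕ) := by rw [← hke4]; rfl
    have hI : Interleaves (n := sz i) (k1, k2) (k3, k4) :=
      ⟨by show k1 < k3; rw [Fin.lt_def]; omega,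
       by show k3 < k2; rw [Fin.lt_def]; omega,
       by show k2 < k4; rw [Fin.lt_def]; omega⟩
    obtain ⟨r, hr, hk1r, hk3r⟩ := hQ i (k1, k2) (k3, k4) hI ⟨q, hq, hk1, hk2⟩ ⟨q', hq', hk3, hk4⟩
    refine ⟨blk sz hn i r, (mem_gparts sz hn Q).2 (Or.inr ⟨i, r, hr, rfl⟩), ?_, ?_⟩
    · exact (mem_blk sz hn).2 ⟨k1, hk1r, hke1⟩
    · exact (mem_blk sz hn).2 ⟨k3, hk3r, hke3⟩

end Build

end PartGF
namespace PartGF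

section Extract

variable {n : ℕ} (hn : 0 < n) (P : Finpartition (Finset.univ : Finset (Fin n)))

def B0 : Finset (Fin n) := P.part ⟨0, hn⟩

lemma B0_mem : B0 hn P ∈ P.parts := P.part_mem.2 (Finset.mem_univ _)

lemma zero_mem_B0 : (⟨0, hn⟩ : Fin n) ∈ B0 hn P := P.mem_part (Finset.mem_univ _)

lemma s0_pos : 0 < (B0 hn P).card := Finset.card_pos.2 ⟨_, zero_mem_B0 hn P⟩

def bfun : Fin (B0 hn P).card ↪o Fin n := (B0 hn P).orderEmbOfFin rfl

lemma mem_B0_iff {x : Fin n} : x ∈ B0 hn P ↔ ∃ i, bfun hn P i = x := by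
  constructor
  · intro hx
    have h2 : x ∈ Set.range ⇑(bfun hn P) := by
      rw [bfun, Finset.range_orderEmbOfFin]
      exact hx
    exact h2
  · rintro ⟨i, rfl⟩
    exact Finset.orderEmbOfFin_mem _ _ _

lemma bfun_zero : bfun hn P ⟨0, s0_pos hn P⟩ = ⟨0, hn⟩ := by
  obtain ⟨i, hi⟩ := (mem_B0_iff hn P).1 (zero_mem_B0 hn P)
  have h1 : bfun hn P ⟨0, s0_pos hn P⟩ ≤ bfun hn P i :=
    (bfun hn P).monotone (by simp [Fin.le_def])
  rw [hi] at h1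
  exact le_antisymm h1 (by simp [Fin.le_def])

/-- extended cut sequence -/
def bN (j : ℕ) : ℕ := if h : j < (B0 hn P).card then (bfun hn P ⟨j, h⟩ : ℕ) else n

/-- the gap sizes extracted from `P` -/
def szE (i : Fin (B0 hn P).card) : ℕ := bN hn P ((i : ℕ) + 1) - bN hn P i - 1

lemma bN_zero : bN hn P 0 = 0 := by
  rw [bN, dif_pos (s0_pos hn P)]
  rw [show (⟨0, s0_pos hn P⟩ : Fin (B0 hn P).card) = ⟨0, s0_pos hn P⟩ from rfl]
  rw [bfun_zero hn P]

lemma bN_last : bN hn P (B0 hn P).card = n := by rw [bN, dif_neg (lt_irrefl _)]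

lemma bN_lt {j : ℕ} (hj : j < (B0 hn P).card) : bN hn P j < bN hn P (j + 1) := by
  rw [bN, dif_pos hj]
  by_cases h : j + 1 < (B0 hn P).card
  · rw [bN, dif_pos h]
    have := (bfun hn P).strictMono
      (show (⟨j, hj⟩ : Fin (B0 hn P).card) < ⟨j + 1, h⟩ from Fin.mk_lt_mk.2 (by omega))
    rw [Fin.lt_def] at this
    exact this
  · rw [bN, dif_neg h]
    exact (bfun hn P ⟨j, hj⟩).isLt

lemma cpt_szE {j : ℕ} (hj : j ≤ (B0 hn P).card) : cpt (szE hn P) j = bN hn P j := by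
  induction j with
  | zero => rw [cpt_zero, bN_zero]
  | succ j ih =>
    have hj' : j < (B0 hn P).card := by omega
    have h1 := cpt_succ (szE hn P) j
    have h2 : szN (szE hn P) j = bN hn P (j + 1) - bN hn P j - 1 := by
      rw [szN, dif_pos hj']; rfl
    have h3 := bN_lt hn P hj'
    rw [h1, ih (by omega), h2]
    omega

lemma hn0 : (∑ i, szE hn P i) + (B0 hn P).card = n := by
  have h2 := cpt_szE hn P (le_refl (B0 hn P).card)
  rw [bN_last] at h2
  have h3 : ∑ j ∈ Finset.range (B0 hn P).card, szN (szE hn P) j = ∑ i, szE hn P i := by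
    rw [← Fin.sum_univ_eq_sum_range]
    exact Finset.sum_congr rfl (fun i _ => szN_coe _ i)
  rw [cpt, h3] at h2
  omega

lemma cut_val (a : Fin (B0 hn P).card) : cpt (szE hn P) (a : ℕ) = (bfun hn P a : ℕ) := by
  rw [cpt_szE hn P (le_of_lt a.isLt), bN, dif_pos a.isLt, Fin.eta]

lemma gap_not_in_B0 {x : Fin n} {i : ℕ} (h1 : cpt (szE hn P) i < ↑x)
    (h2 : ↑x < cpt (szE hn P) (i + 1)) : x ∉ B0 hn P := by
  intro hx
  obtain ⟨a, ha⟩ := (mem_B0_iff hn P).1 hx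
  have hav : cpt (szE hn P) (a : ℕ) = (x : ℕ) := by rw [cut_val, ha]
  exact cpt_not_cut_gap (szE hn P) hav h1 h2

lemma pt_gap {x : Fin n} (hxB : x ∉ B0 hn P) :
    ∃ i < (B0 hn P).card, cpt (szE hn P) i < ↑x ∧ ↑x < cpt (szE hn P) (i + 1) := by
  rcases cpt_locate (szE hn P) (hn0 hn P) x.isLt with ⟨i, hi, hcut⟩ | ⟨i, hi, h1, h2⟩
  · exfalso
    apply hxB
    refine (mem_B0_iff hn P).2 ⟨⟨i, hi⟩, Fin.ext ?_⟩
    rw [← cut_val hn P ⟨i, hi⟩]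
    exact hcut
  · exact ⟨i, hi, h1, h2⟩

lemma no_two_gaps (hNC : NC P) {C : Finset (Fin n)} (hC : C ∈ P.parts)
    {x y : Fin n} (hx : x ∈ C) (hy : y ∈ C) (hxB : x ∉ B0 hn P) {i j : ℕ}
    (hi : i < (B0 hn P).card) (hj : j < (B0 hn P).card)
    (hgx : cpt (szE hn P) i < ↑x ∧ ↑x < cpt (szE hn P) (i + 1))
    (hgy : cpt (szE hn P) j < ↑y ∧ ↑y < cpt (szE hn P) (j + 1))
    (hij : i < j) : False := by
  have hi1 : i + 1 < (B0 hn P).card := by omega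
  have hp2v : (bfun hn P ⟨i + 1, hi1⟩ : ℕ) = cpt (szE hn P) (i + 1) :=
    (cut_val hn P ⟨i + 1, hi1⟩).symm
  have hcj : cpt (szE hn P) (i + 1) ≤ cpt (szE hn P) j :=
    (cpt_strictMono _).monotone (by omega)
  have hI : Interleaves ((⟨0, hn⟩ : Fin n), bfun hn P ⟨i + 1, hi1⟩) (x, y) := by
    refine ⟨?_, ?_, ?_⟩
    · show (⟨0, hn⟩ : Fin n) < x
      rw [Fin.lt_def]
      show 0 < (x : ℕ)
      omega
    · show x < bfun hn P ⟨i + 1, hi1⟩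
      rw [Fin.lt_def]
      omega
    · show bfun hn P ⟨i + 1, hi1⟩ < y
      rw [Fin.lt_def]
      omega
  have h1 : SameBlock P ⟨0, hn⟩ (bfun hn P ⟨i + 1, hi1⟩) :=
    ⟨B0 hn P, B0_mem hn P, zero_mem_B0 hn P, (mem_B0_iff hn P).2 ⟨_, rfl⟩⟩
  have h2 : SameBlock P x y := ⟨C, hC, hx, hy⟩
  obtain ⟨D, hD, h0D, hxD⟩ := hNC _ _ hI h1 h2
  have hDB : D = B0 hn P := P.eq_of_mem_parts hD (B0_mem hn P) h0D (zero_mem_B0 hn P)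
  rw [hDB] at hxD
  exact hxB hxD

lemma gap_of_block (hNC : NC P) {C : Finset (Fin n)} (hC : C ∈ P.parts)
    (hCB : C ≠ B0 hn P) :
    ∃ i < (B0 hn P).card, ∀ x ∈ C, cpt (szE hn P) i < ↑x ∧ ↑x < cpt (szE hn P) (i + 1) := by
  obtain ⟨x0, hx0⟩ := P.nonempty_of_mem_parts hC
  have hx0B : x0 ∉ B0 hn P := fun h => hCB (P.eq_of_mem_parts hC (B0_mem hn P) hx0 h)
  obtain ⟨i0, hi0, hg0⟩ := pt_gap hn P hx0B
  refine ⟨i0, hi0, fun x hx => ?_⟩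
  have hxB : x ∉ B0 hn P := fun h => hCB (P.eq_of_mem_parts hC (B0_mem hn P) hx h)
  obtain ⟨i, hi, hg⟩ := pt_gap hn P hxB
  rcases lt_trichotomy i i0 with h | h | h
  · exact absurd (no_two_gaps hn P hNC hC hx hx0 hxB hi hi0 hg hg0 h) id
  · subst h; exact hg
  · exact absurd (no_two_gaps hn P hNC hC hx0 hx hx0B hi0 hi hg0 hg h) id

end Extract

end PartGF
namespace PartGF

lemma emb_mem_gap {s : ℕ} (sz : Fin s → ℕ) {n : ℕ} (hn : (∑ i, sz i) + s = n) (i : Fin s)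
    (k : Fin (sz i)) :
    cpt sz ↑i < ↑(emb sz hn i k) ∧ ↑(emb sz hn i k) < cpt sz (↑i + 1) := by
  have hv : (emb sz hn i k : ℕ) = cpt sz ↑i + 1 + ↑k := rfl
  have hsz := szN_coe sz i
  have hcs := cpt_succ sz (i : ℕ)
  have hk := k.isLt
  omega

lemma emb_lt_iff {s : ℕ} (sz : Fin s → ℕ) {n : ℕ} (hn : (∑ i, sz i) + s = n) (i : Fin s)
    {k k' : Fin (sz i)} : emb sz hn i k < emb sz hn i k' ↔ k < k' := by
  rw [Fin.lt_def, Fin.lt_def]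
  show cpt sz ↑i + 1 + ↑k < cpt sz ↑i + 1 + ↑k' ↔ _
  omega

section Shrink

variable {n : ℕ} (hn : 0 < n) (P : Finpartition (Finset.univ : Finset (Fin n)))

def shr (i : Fin (B0 hn P).card) (X : Finset (Fin n)) : Finset (Fin (szE hn P i)) :=
  Finset.univ.filter (fun k => emb (szE hn P) (hn0 hn P) i k ∈ X)

lemma mem_shr {i : Fin (B0 hn P).card} {X : Finset (Fin n)} {k : Fin (szE hn P i)} :
    k ∈ shr hn P i X ↔ emb (szE hn P) (hn0 hn P) i k ∈ X := by
  rw [shr, Finset.mem_filter]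
  simp

lemma blk_shr {i : Fin (B0 hn P).card} {X : Finset (Fin n)}
    (hX : ∀ x ∈ X, cpt (szE hn P) ↑i < ↑x ∧ ↑x < cpt (szE hn P) (↑i + 1)) :
    blk (szE hn P) (hn0 hn P) i (shr hn P i X) = X := by
  ext x
  rw [mem_blk]
  constructor
  · rintro ⟨k, hk, rfl⟩
    exact (mem_shr hn P).1 hk
  · intro hx
    have h := hX x hx
    have hsz : szN (szE hn P) ↑i = szE hn P i := szN_coe _ i
    have hcs := cpt_succ (szE hn P) (i : ℕ)
    have hkb : (x : ℕ) - cpt (szE hn P) ↑i - 1 < szE hn P i := by omega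
    have hemb : emb (szE hn P) (hn0 hn P) i ⟨(x : ℕ) - cpt (szE hn P) ↑i - 1, hkb⟩ = x := by
      apply Fin.ext
      show cpt (szE hn P) ↑i + 1 + ((x : ℕ) - cpt (szE hn P) ↑i - 1) = ↑x
      omega
    exact ⟨_, (mem_shr hn P).2 (by rw [hemb]; exact hx), hemb⟩

lemma shr_blk {i : Fin (B0 hn P).card} (q : Finset (Fin (szE hn P i))) :
    shr hn P i (blk (szE hn P) (hn0 hn P) i q) = q := by
  ext k
  rw [mem_shr, mem_blk]
  constructor
  · rintro ⟨k', hk', he⟩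
    rwa [← emb_injective (szE hn P) (hn0 hn P) i he]
  · intro hk
    exact ⟨k, hk, rfl⟩

def gapFilter (i : Fin (B0 hn P).card) : Finset (Finset (Fin n)) :=
  P.parts.filter
    (fun X => X ≠ B0 hn P ∧ ∀ x ∈ X, cpt (szE hn P) ↑i < ↑x ∧ ↑x < cpt (szE hn P) (↑i + 1))

lemma parts_decomp (hNC : NC P) :
    P.parts = insert (B0 hn P) (Finset.univ.biUnion fun i => gapFilter hn P i) := by
  ext X
  rw [Finset.mem_insert, Finset.mem_biUnion]
  constructor
  · intro hX
    by_cases hB : X = B0 hn P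
    · exact Or.inl hB
    · obtain ⟨i, hi, hgap⟩ := gap_of_block hn P hNC hX hB
      exact Or.inr ⟨⟨i, hi⟩, Finset.mem_univ _, Finset.mem_filter.2 ⟨hX, hB, hgap⟩⟩
  · rintro (rfl | ⟨i, _, hX⟩)
    · exact B0_mem hn P
    · exact (Finset.mem_filter.1 hX).1

def QE (hNC : NC P) (i : Fin (B0 hn P).card) :
    Finpartition (Finset.univ : Finset (Fin (szE hn P i))) where
  parts := (gapFilter hn P i).image (shr hn P i)
  supIndep := by
    rw [Finset.supIndep_iff_pairwiseDisjoint]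
    intro q hq q' hq' hne
    rw [Finset.mem_coe] at hq hq'
    obtain ⟨X, hX, rfl⟩ := Finset.mem_image.1 hq
    obtain ⟨X', hX', rfl⟩ := Finset.mem_image.1 hq'
    show Disjoint (shr hn P i X) (shr hn P i X')
    rw [Finset.disjoint_left]
    intro k hk hk'
    have h1 := (mem_shr hn P).1 hk
    have h2 := (mem_shr hn P).1 hk'
    have hXX : X = X' :=
      P.eq_of_mem_parts (Finset.mem_filter.1 hX).1 (Finset.mem_filter.1 hX').1 h1 h2
    exact hne (by rw [hXX])
  sup_parts := by
    apply Finset.Subset.antisymm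
    · intro k _
      exact Finset.mem_univ _
    · intro k _
      rw [Finset.mem_sup]
      have hxgap := emb_mem_gap (szE hn P) (hn0 hn P) i k
      set x := emb (szE hn P) (hn0 hn P) i k with hxdef
      have hXp : P.part x ∈ P.parts := P.part_mem.2 (Finset.mem_univ x)
      have hxX : x ∈ P.part x := P.mem_part (Finset.mem_univ x)
      have hXB : P.part x ≠ B0 hn P := fun h =>
        gap_not_in_B0 hn P hxgap.1 hxgap.2 (h ▸ hxX)
      obtain ⟨j, hj, hgap⟩ := gap_of_block hn P hNC hXp hXB
      have hij : j = ↑i :=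
        cpt_gap_unique _ (hgap x hxX).1 (hgap x hxX).2 hxgap.1 hxgap.2
      rw [hij] at hgap
      exact ⟨shr hn P i (P.part x),
        Finset.mem_image_of_mem _ (Finset.mem_filter.2 ⟨hXp, hXB, hgap⟩),
        (mem_shr hn P).2 hxX⟩
  bot_notMem := by
    intro h
    obtain ⟨X, hX, hshr⟩ := Finset.mem_image.1 h
    obtain ⟨hXp, hXB, hgap⟩ := Finset.mem_filter.1 hX
    have hb : blk (szE hn P) (hn0 hn P) i (shr hn P i X) = X := blk_shr hn P hgap
    rw [hshr] at hb
    have h2 : X = ∅ := by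
      rw [← hb]
      rfl
    rw [h2] at hXp
    exact P.bot_notMem hXp

lemma card_shr {i : Fin (B0 hn P).card} {X : Finset (Fin n)}
    (hX : ∀ x ∈ X, cpt (szE hn P) ↑i < ↑x ∧ ↑x < cpt (szE hn P) (↑i + 1)) :
    (shr hn P i X).card = X.card := by
  conv_rhs => rw [← blk_shr hn P hX]
  rw [card_blk]

lemma QE_parts_card (hNC : NC P) (i : Fin (B0 hn P).card) :
    (QE hn P hNC i).parts.card = (gapFilter hn P i).card := by
  apply Finset.card_image_of_injOn
  intro X hX X' hX' h
  rw [← blk_shr hn P (Finset.mem_filter.1 hX).2.2, h,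
    blk_shr hn P (Finset.mem_filter.1 hX').2.2]

lemma QE_sizes {S : Set ℕ} (hNC : NC P) (i : Fin (B0 hn P).card)
    (hsz : ∀ B ∈ P.parts, B.card ∈ S) :
    ∀ q ∈ (QE hn P hNC i).parts, q.card ∈ S := by
  intro q hq
  obtain ⟨X, hX, rfl⟩ := Finset.mem_image.1 hq
  rw [card_shr hn P (Finset.mem_filter.1 hX).2.2]
  exact hsz X (Finset.mem_filter.1 hX).1

lemma QE_NC (hNC : NC P) (i : Fin (B0 hn P).card) : NC (QE hn P hNC i) := by
  rintro ⟨k1, k2⟩ ⟨k3, k4⟩ ⟨h12, h32, h24⟩ ⟨q, hq, hk1, hk2⟩ ⟨q', hq', hk3, hk4⟩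
  obtain ⟨X, hX, rfl⟩ := Finset.mem_image.1 hq
  obtain ⟨X', hX', rfl⟩ := Finset.mem_image.1 hq'
  simp only at hk1 hk2 hk3 hk4 h12 h32 h24
  have e1 := (mem_shr hn P).1 hk1
  have e2 := (mem_shr hn P).1 hk2
  have e3 := (mem_shr hn P).1 hk3
  have e4 := (mem_shr hn P).1 hk4
  have hI : Interleaves (emb (szE hn P) (hn0 hn P) i k1, emb (szE hn P) (hn0 hn P) i k2)
      (emb (szE hn P) (hn0 hn P) i k3, emb (szE hn P) (hn0 hn P) i k4) := by
    refine ⟨?_, ?_, ?_⟩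
    · exact (emb_lt_iff (szE hn P) (hn0 hn P) i).2 h12
    · exact (emb_lt_iff (szE hn P) (hn0 hn P) i).2 h32
    · exact (emb_lt_iff (szE hn P) (hn0 hn P) i).2 h24
  obtain ⟨D, hD, hD1, hD3⟩ := hNC _ _ hI
    ⟨X, (Finset.mem_filter.1 hX).1, e1, e2⟩ ⟨X', (Finset.mem_filter.1 hX').1, e3, e4⟩
  have hgap1 := emb_mem_gap (szE hn P) (hn0 hn P) i k1
  have hDB : D ≠ B0 hn P := fun h => gap_not_in_B0 hn P hgap1.1 hgap1.2 (h ▸ hD1)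
  obtain ⟨j, hj, hgap⟩ := gap_of_block hn P hNC hD hDB
  have hij : j = ↑i := cpt_gap_unique _ (hgap _ hD1).1 (hgap _ hD1).2 hgap1.1 hgap1.2
  rw [hij] at hgap
  exact ⟨shr hn P i D,
    Finset.mem_image_of_mem _ (Finset.mem_filter.2 ⟨hD, hDB, hgap⟩),
    (mem_shr hn P).2 hD1, (mem_shr hn P).2 hD3⟩

lemma blk_image_QE (hNC : NC P) (i : Fin (B0 hn P).card) :
    (QE hn P hNC i).parts.image (blk (szE hn P) (hn0 hn P) i) = gapFilter hn P i := by
  ext X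
  constructor
  · intro hX
    obtain ⟨q, hq, rfl⟩ := Finset.mem_image.1 hX
    obtain ⟨Y, hY, rfl⟩ := Finset.mem_image.1 hq
    rw [blk_shr hn P (Finset.mem_filter.1 hY).2.2]
    exact hY
  · intro hX
    exact Finset.mem_image.2 ⟨shr hn P i X, Finset.mem_image_of_mem _ hX,
      blk_shr hn P (Finset.mem_filter.1 hX).2.2⟩

lemma base_eq_B0 : base (szE hn P) (hn0 hn P) = B0 hn P := by
  ext x
  rw [mem_base]
  constructor
  · rintro ⟨i, hi⟩
    refine (mem_B0_iff hn P).2 ⟨i, Fin.ext ?_⟩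
    rw [← cut_val hn P i]
    exact hi
  · intro hx
    obtain ⟨i, rfl⟩ := (mem_B0_iff hn P).1 hx
    exact ⟨i, cut_val hn P i⟩

lemma GP_eq (hNC : NC P) :
    GP (szE hn P) (hn0 hn P) (s0_pos hn P) (QE hn P hNC) = P := by
  apply Finpartition.ext
  show gparts (szE hn P) (hn0 hn P) (QE hn P hNC) = P.parts
  rw [parts_decomp hn P hNC, gparts, base_eq_B0]
  congr 1
  apply Finset.biUnion_congr rfl
  intro i _
  exact blk_image_QE hn P hNC i

lemma parts_card_eq (hNC : NC P) :
    P.parts.card = 1 + ∑ i, (QE hn P hNC i).parts.card := by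
  conv_lhs => rw [← GP_eq hn P hNC]
  exact GP_parts_card (szE hn P) (hn0 hn P) (s0_pos hn P) (QE hn P hNC)

end Shrink

end PartGF
namespace PartGF

section Read

variable {s : ℕ} (sz : Fin s → ℕ) {n : ℕ} (hn : (∑ i, sz i) + s = n)
include hn

lemma embB_strictMono : StrictMono (embB sz hn) := fun i j hij => by
  rw [Fin.lt_def]
  show cpt sz ↑i < cpt sz ↑j
  exact cpt_strictMono sz hij

lemma blk_injective (i : Fin s) : Function.Injective (blk sz hn i) :=
  Finset.image_injective (emb_injective sz hn i)

lemma zero_mem_base (hs : 0 < s) (hnpos : 0 < n) :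
    (⟨0, hnpos⟩ : Fin n) ∈ base sz hn :=
  (mem_base sz hn).2 ⟨⟨0, hs⟩, cpt_zero sz⟩

variable (hs : 0 < s) (Q : ∀ i : Fin s, Finpartition (Finset.univ : Finset (Fin (sz i))))

lemma base_mem_GP : base sz hn ∈ (GP sz hn hs Q).parts :=
  (mem_gparts sz hn Q).2 (Or.inl rfl)

lemma GP_filter (i : Fin s) :
    ((GP sz hn hs Q).parts.filter
      (fun X => X ≠ base sz hn ∧ ∀ x ∈ X, cpt sz ↑i < ↑x ∧ ↑x < cpt sz (↑i + 1)))
    = (Q i).parts.image (blk sz hn i) := by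
  ext X
  rw [Finset.mem_filter]
  constructor
  · rintro ⟨hX, hXb, hgap⟩
    rcases (mem_gparts sz hn Q).1 hX with rfl | ⟨j, q, hq, rfl⟩
    · exact absurd rfl hXb
    · obtain ⟨x, hx⟩ := blk_nonempty sz hn Q hq
      have h1 := blk_range sz hn hx
      have h2 := hgap x hx
      have hji : j = i := Fin.ext (cpt_gap_unique sz h1.1 h1.2 h2.1 h2.2)
      subst hji
      exact Finset.mem_image_of_mem _ hq
  · intro hX
    obtain ⟨q, hq, rfl⟩ := Finset.mem_image.1 hX
    exact ⟨(mem_gparts sz hn Q).2 (Or.inr ⟨i, q, hq, rfl⟩),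
      (base_ne_blk sz hn Q hq).symm, fun x hx => blk_range sz hn hx⟩

end Read

section Bij

variable {S : Set ℕ} (hS : ∀ t ∈ S, 0 < t) {n m : ℕ}

noncomputable def Gmap (d : Decomp S n m) : Valid S n m :=
  ⟨GP (fun i => (d.g i).1) d.hg1 (hS d.s d.hs) (fun i => (d.part i).1),
   by
     intro B hB
     rcases (mem_gparts _ d.hg1 _).1 hB with rfl | ⟨i, q, hq, rfl⟩
     · rw [card_base]
       exact d.hs
     · rw [card_blk]
       exact (d.part i).2.1 q hq,
   by
     rw [crossNumPart_eq_zero_iff]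
     exact GP_NC _ d.hg1 (hS d.s d.hs) _
       (fun i => (crossNumPart_eq_zero_iff _).1 (d.part i).2.2.1),
   by
     rw [GP_parts_card]
     rw [Finset.sum_congr rfl (fun i _ => (d.part i).2.2.2)]
     have := d.hg2
     omega⟩

lemma Gmap_surj (hn : 0 < n) : Function.Surjective (Gmap hS (n := n) (m := m)) := by
  rintro ⟨P, hsz, hcr, hcard⟩
  have hNC := (crossNumPart_eq_zero_iff P).1 hcr
  refine ⟨⟨(B0 hn P).card, hsz _ (B0_mem hn P),
    fun i => (szE hn P i, (QE hn P hNC i).parts.card),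
    hn0 hn P,
    by
      show (∑ i : Fin (B0 hn P).card, (QE hn P hNC i).parts.card) + 1 = m
      have h := parts_card_eq hn P hNC
      rw [hcard] at h
      omega,
    fun i => ⟨QE hn P hNC i, QE_sizes hn P hNC i hsz,
      (crossNumPart_eq_zero_iff _).2 (QE_NC hn P hNC i), rfl⟩⟩, ?_⟩
  exact Subtype.ext (GP_eq hn P hNC)

lemma Gmap_inj : Function.Injective (Gmap hS (n := n) (m := m)) := by
  rintro d d' h
  have hP := congrArg Subtype.val h
  obtain ⟨s, hsS, g, h1, h2, part⟩ := d
  obtain ⟨s', hsS', g', h1', h2', part'⟩ := d'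
  simp only [Gmap] at hP
  have hspos : 0 < s := hS s hsS
  have hspos' : 0 < s' := hS s' hsS'
  have hnpos : 0 < n := by omega
  have hparts := congrArg Finpartition.parts hP
  -- step 1 : base blocks agree
  have hbase : base (fun i => (g i).1) h1 = base (fun i => (g' i).1) h1' := by
    have hb1 : base (fun i => (g i).1) h1 ∈
        (GP (fun i => (g' i).1) h1' hspos' (fun i => (part' i).1)).parts := by
      rw [← hparts]
      exact base_mem_GP _ h1 hspos (fun i => (part i).1)
    exact (GP (fun i => (g' i).1) h1' hspos' (fun i => (part' i).1)).eq_of_mem_parts hb1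
      (base_mem_GP _ h1' hspos' (fun i => (part' i).1))
      (zero_mem_base _ h1 hspos hnpos) (zero_mem_base _ h1' hspos' hnpos)
  -- step 2 : s = s'
  have hss : s = s' := by
    rw [← card_base (fun i => (g i).1) h1, hbase, card_base]
  subst hss
  -- step 3 : the strictly monotone enumerations of the base agree
  have e1 : (embB (fun i => (g i).1) h1 : Fin s → Fin n) =
      ⇑((base (fun i => (g i).1) h1).orderEmbOfFin (card_base (fun i => (g i).1) h1)) :=
    Finset.orderEmbOfFin_unique _
      (fun i => Finset.mem_image_of_mem _ (Finset.mem_univ i)) (embB_strictMono _ h1)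
  have e2 : (embB (fun i => (g' i).1) h1' : Fin s → Fin n) =
      ⇑((base (fun i => (g i).1) h1).orderEmbOfFin (card_base (fun i => (g i).1) h1)) :=
    Finset.orderEmbOfFin_unique _
      (fun i => by rw [hbase]; exact Finset.mem_image_of_mem _ (Finset.mem_univ i))
      (embB_strictMono _ h1')
  have hembB : ∀ i : Fin s, embB (fun i => (g i).1) h1 i = embB (fun i => (g' i).1) h1' i :=
    fun i => by rw [e1, e2]
  -- step 4 : cut points agree
  have hcpt : ∀ j, j ≤ s → cpt (fun i => (g i).1) j = cpt (fun i => (g' i).1) j := by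
    intro j hj
    rcases eq_or_lt_of_le hj with rfl | hj
    · rw [cpt_s _ h1, cpt_s _ h1']
    · exact congrArg Fin.val (hembB ⟨j, hj⟩)
  -- step 5 : first components of g agree
  have hsz1 : ∀ i : Fin s, (g i).1 = (g' i).1 := by
    intro i
    have ha := cpt_succ (fun i => (g i).1) ↑i
    have hb := cpt_succ (fun i => (g' i).1) ↑i
    have hc : szN (fun i => (g i).1) ↑i = (g i).1 := szN_coe _ i
    have hd : szN (fun i => (g' i).1) ↑i = (g' i).1 := szN_coe _ i
    have h1i := hcpt ↑i (le_of_lt i.isLt)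
    have h2i := hcpt (↑i + 1) i.isLt
    omega
  -- step 6 : gap block images agree
  have himg : ∀ i : Fin s,
      (part i).1.parts.image (blk (fun i => (g i).1) h1 i) =
      (part' i).1.parts.image (blk (fun i => (g' i).1) h1' i) := by
    intro i
    rw [← GP_filter _ h1 hspos (fun i => (part i).1) i,
      ← GP_filter _ h1' hspos' (fun i => (part' i).1) i,
      hparts, hbase, hcpt ↑i (le_of_lt i.isLt), hcpt (↑i + 1) i.isLt]
  -- step 7 : second components of g agree
  have hsz2 : ∀ i : Fin s, (g i).2 = (g' i).2 := by
    intro i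
    rw [← (part i).2.2.2, ← (part' i).2.2.2]
    rw [← Finset.card_image_of_injective (part i).1.parts (blk_injective _ h1 i),
      ← Finset.card_image_of_injective (part' i).1.parts (blk_injective _ h1' i)]
    rw [himg i]
  have hg : g = g' := funext fun i => Prod.ext (hsz1 i) (hsz2 i)
  subst hg
  -- step 8 : the gap partitions agree
  have hQ : ∀ i : Fin s, (part i).1 = (part' i).1 := by
    intro i
    apply Finpartition.ext
    exact Finset.image_injective (blk_injective _ h1 i) (himg i)
  have hpart : part = part' := funext fun i => Subtype.ext (hQ i)
  subst hpart
  rfl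

include hS in
lemma card_valid_eq [DecidablePred (· ∈ S)] (hn : 0 < n) :
    cnt S n m = Nat.card (Decomp S n m) :=
  (Nat.card_eq_of_bijective (Gmap hS) ⟨Gmap_inj hS, Gmap_surj hS hn⟩).symm

include hS in
lemma cnt_eq_sum [DecidablePred (· ∈ S)] (hn : 0 < n) (hm : 0 < m) :
    cnt S n m = ∑ s ∈ (Finset.range (n + 1)).filter (· ∈ S),
      ∑ l ∈ Finset.finsuppAntidiag (Finset.range s)
        (Finsupp.single (0 : Fin 2) (n - s) + Finsupp.single (1 : Fin 2) (m - 1)),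
        ∏ i ∈ Finset.range s, cnt S (l i 0) (l i 1) := by
  rw [card_valid_eq hS hn, card_decomp S hm]
  exact Finset.sum_congr rfl fun s _ => card_fiberT S s (n - s) (m - 1)

end Bij

end PartGF

/-- For any nonempty set `S` of positive integers, the generating function
`P₀^S(x,y)` of crossing-free partitions with block sizes in `S` satisfies
`P₀^S(x,y) = 1 + y Σ_{s∈S} x^s (P₀^S(x,y))^s`; the identity is stated
coefficientwise, truncating the (formally convergent) sum over `s ∈ S` at the
relevant degree, since the terms with `s` greater than the `x`-degree of the
coefficient do not contribute. -/
theorem partGF0S_functional_equation (S : Set ℕ) [DecidablePred (· ∈ S)]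
    (hS : ∀ s ∈ S, 0 < s) (hne : S.Nonempty) :
    ∀ e : Fin 2 →₀ ℕ,
      MvPowerSeries.coeff e (partGF0S S) =
        MvPowerSeries.coeff e (1 : MvPowerSeries (Fin 2) ℚ) +
          ∑ s ∈ (Finset.range (e 0 + 1)).filter (· ∈ S),
            MvPowerSeries.coeff e
              (MvPowerSeries.X 1 * MvPowerSeries.X 0 ^ s * partGF0S S ^ s) := by
  intro e
  classical
  by_cases hn : e 0 = 0
  · have hfil : (Finset.range (e 0 + 1)).filter (· ∈ S) = ∅ := by
      apply Finset.eq_empty_iff_forall_notMem.2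
      intro t ht
      rw [Finset.mem_filter, Finset.mem_range, hn] at ht
      have := hS t ht.2
      omega
    rw [hfil, Finset.sum_empty, add_zero, MvPowerSeries.coeff_one, PartGF.coeff_partGF0S, hn,
      PartGF.cnt_zero]
    by_cases hm : e 1 = 0
    · rw [if_pos hm, if_pos (PartGF.fin2_ext (v := 0) (by rw [hn]; rfl) (by rw [hm]; rfl))]
      norm_num
    · rw [if_neg hm, if_neg (fun h => hm (by rw [h]; rfl))]
      norm_num
  · have hnpos : 0 < e 0 := Nat.pos_of_ne_zero hn
    have hone : MvPowerSeries.coeff e (1 : MvPowerSeries (Fin 2) ℚ) = 0 := by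
      rw [MvPowerSeries.coeff_one, if_neg (fun h => hn (by rw [h]; rfl))]
    rw [hone, zero_add, PartGF.coeff_partGF0S]
    have hterm : ∀ t ∈ (Finset.range (e 0 + 1)).filter (· ∈ S),
        MvPowerSeries.coeff e (MvPowerSeries.X 1 * MvPowerSeries.X 0 ^ t * partGF0S S ^ t) =
        if 1 ≤ e 1 then
          ∑ l ∈ Finset.finsuppAntidiag (Finset.range t)
            (Finsupp.single (0 : Fin 2) (e 0 - t) + Finsupp.single (1 : Fin 2) (e 1 - 1)),
            ∏ i ∈ Finset.range t, (PartGF.cnt S (l i 0) (l i 1) : ℚ)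
        else 0 := by
      intro t ht
      rw [Finset.mem_filter, Finset.mem_range] at ht
      have hts : t ≤ e 0 := by omega
      have hXX : (MvPowerSeries.X 1 * MvPowerSeries.X 0 ^ t : MvPowerSeries (Fin 2) ℚ) =
          MvPowerSeries.monomial
            (Finsupp.single (0 : Fin 2) t + Finsupp.single (1 : Fin 2) 1) 1 := by
        rw [MvPowerSeries.X_def, MvPowerSeries.X_pow_eq, MvPowerSeries.monomial_mul_monomial,
          one_mul, add_comm (Finsupp.single (1 : Fin 2) 1) (Finsupp.single (0 : Fin 2) t)]
      rw [hXX, MvPowerSeries.coeff_monomial_mul, one_mul]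
      by_cases hm : 1 ≤ e 1
      · rw [if_pos hm]
        have hle : Finsupp.single (0 : Fin 2) t + Finsupp.single (1 : Fin 2) 1 ≤ e := by
          rw [Finsupp.le_def]
          intro x
          revert x
          rw [Fin.forall_fin_two]
          constructor
          · rw [PartGF.fin2_single_add_apply_zero]; omega
          · rw [PartGF.fin2_single_add_apply_one]; omega
        rw [if_pos hle]
        have hsub : e - (Finsupp.single (0 : Fin 2) t + Finsupp.single (1 : Fin 2) 1) =
            Finsupp.single (0 : Fin 2) (e 0 - t) + Finsupp.single (1 : Fin 2) (e 1 - 1) := by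
          apply PartGF.fin2_ext
          · rw [Finsupp.tsub_apply, PartGF.fin2_single_add_apply_zero,
              PartGF.fin2_single_add_apply_zero]
          · rw [Finsupp.tsub_apply, PartGF.fin2_single_add_apply_one,
              PartGF.fin2_single_add_apply_one]
        rw [hsub, MvPowerSeries.coeff_pow]
        exact Finset.sum_congr rfl fun l _ => Finset.prod_congr rfl
          fun i _ => PartGF.coeff_partGF0S S (l i)
      · rw [if_neg hm, if_neg]
        intro hle
        rw [Finsupp.le_def] at hle
        have h2 := hle 1
        rw [PartGF.fin2_single_add_apply_one] at h2
        omega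
    rw [Finset.sum_congr rfl hterm]
    by_cases hm : e 1 = 0
    · have hz : ∀ t ∈ (Finset.range (e 0 + 1)).filter (· ∈ S),
          (if 1 ≤ e 1 then
            ∑ l ∈ Finset.finsuppAntidiag (Finset.range t)
              (Finsupp.single (0 : Fin 2) (e 0 - t) + Finsupp.single (1 : Fin 2) (e 1 - 1)),
              ∏ i ∈ Finset.range t, (PartGF.cnt S (l i 0) (l i 1) : ℚ)
          else 0) = 0 := fun t _ => if_neg (by omega)
      rw [Finset.sum_congr rfl hz, Finset.sum_const_zero, hm,
        PartGF.cnt_blocks_zero S hnpos]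
      norm_num
    · have hm1 : 1 ≤ e 1 := Nat.pos_of_ne_zero hm
      rw [Finset.sum_congr rfl (fun t _ => if_pos hm1), PartGF.cnt_eq_sum hS hnpos hm1]
      push_cast
      rfl
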